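/- arXiv:1309.7253 — 2 statements merged into one kernel-verified Lean document; each statement's English description precedes it below -/
import Mathlib

section
/- Let C be a totally antisymmetric 3-tensor on a D-dimensional real vector space and I an endomorphism with I² = -id. Define H(C,I)_{μνλ} = (1/4)(C_{μνλ} - I_μ^ρ I_ν^σ C_{ρσλ} - I_λ^ρ I_μ^σ C_{ρσν} - I_ν^ρ I_λ^σ C_{ρσμ}). Then H is a projector in the sense that H(H(C,I),I) = H(C,I). -/
open Finset Matrix

noncomputable section

/-- 3-dimensional Levi-Civita symbol (0-indexed). -/
def eps3 (a b c : Fin 3) : ℝ :=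
  (((b:ℕ):ℝ) - ((a:ℕ):ℝ)) * (((c:ℕ):ℝ) - ((a:ℕ):ℝ)) * (((c:ℕ):ℝ) - ((b:ℕ):ℝ)) / 2

/-- 4-dimensional Levi-Civita symbol (0-indexed). -/
def eps4 (a b c d : Fin 4) : ℝ :=
  (((b:ℕ):ℝ) - ((a:ℕ):ℝ)) * (((c:ℕ):ℝ) - ((a:ℕ):ℝ)) * (((d:ℕ):ℝ) - ((a:ℕ):ℝ)) *
    (((c:ℕ):ℝ) - ((b:ℕ):ℝ)) * (((d:ℕ):ℝ) - ((b:ℕ):ℝ)) * (((d:ℕ):ℝ) - ((c:ℕ):ℝ)) / 12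

/-- Kronecker delta. -/
def delta {n : ℕ} (i j : Fin n) : ℝ := if i = j then 1 else 0

/-- Self-dual 't Hooft symbol η^a_{BC}.  Indices `0,1,2 : Fin 4` play the role of
the indices `1,2,3` of the paper, and `3 : Fin 4` plays the role of the index `4`. -/
def eta (a : Fin 3) (B C : Fin 4) : ℝ :=
  if hB : (B:ℕ) < 3 then
    if hC : (C:ℕ) < 3 then eps3 a ⟨B, hB⟩ ⟨C, hC⟩
    else if (B:ℕ) = (a:ℕ) then 1 else 0
  else
    if (C:ℕ) < 3 then (if (C:ℕ) = (a:ℕ) then -1 else 0) else 0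

/-- Anti-self-dual 't Hooft symbol η̄^a_{BC}. -/
def etabar (a : Fin 3) (B C : Fin 4) : ℝ :=
  if hB : (B:ℕ) < 3 then
    if hC : (C:ℕ) < 3 then eps3 a ⟨B, hB⟩ ⟨C, hC⟩
    else if (B:ℕ) = (a:ℕ) then -1 else 0
  else
    if (C:ℕ) < 3 then (if (C:ℕ) = (a:ℕ) then 1 else 0) else 0

/-- The (anti)holomorphic projection H(C,I) of a totally antisymmetric 3-tensor C. -/
def Hten {D : ℕ} (C : Fin D → Fin D → Fin D → ℝ) (I : Matrix (Fin D) (Fin D) ℝ)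
    (μ ν lam : Fin D) : ℝ :=
  (1/4) * (C μ ν lam
    - ∑ ρ : Fin D, ∑ σ : Fin D, I μ ρ * I ν σ * C ρ σ lam
    - ∑ ρ : Fin D, ∑ σ : Fin D, I lam ρ * I μ σ * C ρ σ ν
    - ∑ ρ : Fin D, ∑ σ : Fin D, I ν ρ * I lam σ * C ρ σ μ)


section Aux

variable {D : ℕ} (I : Matrix (Fin D) (Fin D) ℝ)

lemma hII (hI : I * I = -1) (a b : Fin D) :
    ∑ ρ, I a ρ * I ρ b = if a = b then (-1:ℝ) else 0 := by
  have := congrFun (congrFun hI a) b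
  rw [Matrix.mul_apply] at this; rw [this]; simp [Matrix.one_apply]; split <;> simp

lemma contract1 (hI : I * I = -1) (μ : Fin D) (g : Fin D → ℝ) :
    ∑ ρ, ∑ β, I μ ρ * I ρ β * g β = -g μ := by
  rw [Finset.sum_comm]
  have : ∀ β, ∑ ρ, I μ ρ * I ρ β * g β = (if μ = β then (-1:ℝ) else 0) * g β := by
    intro β; rw [← Finset.sum_mul, hII I hI]
  simp [this, ite_mul]

lemma sum4_1 (f : Fin D → Fin D → Fin D → Fin D → ℝ) :
    ∑ ρ, ∑ σ, ∑ α, ∑ β, f ρ σ α β = ∑ α, ∑ β, ∑ ρ, ∑ σ, f ρ σ α β := by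
  calc ∑ ρ, ∑ σ, ∑ α, ∑ β, f ρ σ α β
      = ∑ ρ, ∑ α, ∑ σ, ∑ β, f ρ σ α β :=
        Finset.sum_congr rfl fun ρ _ => Finset.sum_comm
    _ = ∑ α, ∑ ρ, ∑ σ, ∑ β, f ρ σ α β := Finset.sum_comm
    _ = ∑ α, ∑ ρ, ∑ β, ∑ σ, f ρ σ α β :=
        Finset.sum_congr rfl fun α _ => Finset.sum_congr rfl fun ρ _ => Finset.sum_comm
    _ = ∑ α, ∑ β, ∑ ρ, ∑ σ, f ρ σ α β :=
        Finset.sum_congr rfl fun α _ => Finset.sum_comm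

lemma lemA (hI : I * I = -1) (g : Fin D → Fin D → ℝ) (μ ν : Fin D) :
    ∑ ρ, ∑ σ, I μ ρ * I ν σ * (∑ α, ∑ β, I ρ α * I σ β * g α β) = g μ ν := by
  have step : ∀ ρ, ∑ σ, I μ ρ * I ν σ * (∑ α, ∑ β, I ρ α * I σ β * g α β)
      = ∑ σ, ∑ α, ∑ β, (I μ ρ * I ρ α) * ((I ν σ * I σ β) * g α β) := by
    intro ρ
    refine Finset.sum_congr rfl fun σ _ => ?_
    rw [Finset.mul_sum]
    refine Finset.sum_congr rfl fun α _ => ?_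
    rw [Finset.mul_sum]
    exact Finset.sum_congr rfl fun β _ => by ring
  simp only [step]
  rw [sum4_1 (fun ρ σ α β => (I μ ρ * I ρ α) * ((I ν σ * I σ β) * g α β))]
  have inner : ∀ α β, ∑ ρ, ∑ σ, (I μ ρ * I ρ α) * ((I ν σ * I σ β) * g α β)
      = (∑ ρ, I μ ρ * I ρ α) * ((∑ σ, I ν σ * I σ β) * g α β) := by
    intro α β
    rw [Finset.sum_mul]
    refine Finset.sum_congr rfl fun ρ _ => ?_
    rw [Finset.sum_mul, Finset.mul_sum]
  simp only [inner, hII I hI, ite_mul]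
  simp [Finset.sum_ite_eq]

lemma sum4_2 (f : Fin D → Fin D → Fin D → Fin D → ℝ) :
    ∑ ρ, ∑ σ, ∑ α, ∑ β, f ρ σ α β = ∑ σ, ∑ α, ∑ ρ, ∑ β, f ρ σ α β := by
  rw [Finset.sum_comm]
  exact Finset.sum_congr rfl fun σ _ => Finset.sum_comm

lemma sum4_3 (f : Fin D → Fin D → Fin D → Fin D → ℝ) :
    ∑ ρ, ∑ σ, ∑ α, ∑ β, f ρ σ α β = ∑ ρ, ∑ β, ∑ σ, ∑ α, f ρ σ α β := by
  refine Finset.sum_congr rfl fun ρ _ => ?_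
  calc ∑ σ, ∑ α, ∑ β, f ρ σ α β
      = ∑ σ, ∑ β, ∑ α, f ρ σ α β :=
        Finset.sum_congr rfl fun σ _ => Finset.sum_comm
    _ = ∑ β, ∑ σ, ∑ α, f ρ σ α β := Finset.sum_comm

lemma lemB (hI : I * I = -1) (g : Fin D → Fin D → Fin D → ℝ) (μ ν lam : Fin D) :
    ∑ ρ, ∑ σ, I μ ρ * I ν σ * (∑ α, ∑ β, I lam α * I ρ β * g α β σ)
      = -∑ α, ∑ σ, I lam α * I ν σ * g α μ σ := by
  have step : ∀ ρ, ∑ σ, I μ ρ * I ν σ * (∑ α, ∑ β, I lam α * I ρ β * g α β σ)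
      = ∑ σ, ∑ α, ∑ β, I μ ρ * I ρ β * (I ν σ * (I lam α * g α β σ)) := by
    intro ρ
    refine Finset.sum_congr rfl fun σ _ => ?_
    rw [Finset.mul_sum]
    refine Finset.sum_congr rfl fun α _ => ?_
    rw [Finset.mul_sum]
    exact Finset.sum_congr rfl fun β _ => by ring
  simp only [step]
  rw [sum4_2 (fun ρ σ α β => I μ ρ * I ρ β * (I ν σ * (I lam α * g α β σ)))]
  have inner : ∀ σ α, ∑ ρ, ∑ β, I μ ρ * I ρ β * (I ν σ * (I lam α * g α β σ))
      = -(I ν σ * (I lam α * g α μ σ)) :=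
    fun σ α => contract1 I hI μ (fun β => I ν σ * (I lam α * g α β σ))
  simp only [inner, Finset.sum_neg_distrib]
  rw [neg_inj.2 Finset.sum_comm]
  congr 1
  refine Finset.sum_congr rfl fun α _ => Finset.sum_congr rfl fun σ _ => by ring

lemma lemC (hI : I * I = -1) (g : Fin D → Fin D → Fin D → ℝ) (μ ν lam : Fin D) :
    ∑ ρ, ∑ σ, I μ ρ * I ν σ * (∑ α, ∑ β, I σ α * I lam β * g α β ρ)
      = -∑ ρ, ∑ β, I μ ρ * I lam β * g ν β ρ := by
  have step : ∀ ρ, ∑ σ, I μ ρ * I ν σ * (∑ α, ∑ β, I σ α * I lam β * g α β ρ)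
      = ∑ σ, ∑ α, ∑ β, I ν σ * I σ α * (I μ ρ * (I lam β * g α β ρ)) := by
    intro ρ
    refine Finset.sum_congr rfl fun σ _ => ?_
    rw [Finset.mul_sum]
    refine Finset.sum_congr rfl fun α _ => ?_
    rw [Finset.mul_sum]
    exact Finset.sum_congr rfl fun β _ => by ring
  simp only [step]
  have reorder : ∀ ρ, ∑ σ, ∑ α, ∑ β, I ν σ * I σ α * (I μ ρ * (I lam β * g α β ρ))
      = ∑ β, ∑ σ, ∑ α, I ν σ * I σ α * (I μ ρ * (I lam β * g α β ρ)) := by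
    intro ρ
    calc ∑ σ, ∑ α, ∑ β, I ν σ * I σ α * (I μ ρ * (I lam β * g α β ρ))
        = ∑ σ, ∑ β, ∑ α, I ν σ * I σ α * (I μ ρ * (I lam β * g α β ρ)) :=
          Finset.sum_congr rfl fun σ _ => Finset.sum_comm
      _ = ∑ β, ∑ σ, ∑ α, I ν σ * I σ α * (I μ ρ * (I lam β * g α β ρ)) := Finset.sum_comm
  simp only [reorder]
  have inner : ∀ ρ β, ∑ σ, ∑ α, I ν σ * I σ α * (I μ ρ * (I lam β * g α β ρ))
      = -(I μ ρ * (I lam β * g ν β ρ)) :=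
    fun ρ β => contract1 I hI ν (fun α => I μ ρ * (I lam β * g α β ρ))
  simp only [inner, Finset.sum_neg_distrib]
  congr 1
  refine Finset.sum_congr rfl fun ρ _ => Finset.sum_congr rfl fun β _ => by ring

noncomputable def Fop {D : ℕ} (C : Fin D → Fin D → Fin D → ℝ) (I : Matrix (Fin D) (Fin D) ℝ)
    (μ ν lam : Fin D) : ℝ :=
  ∑ ρ : Fin D, ∑ σ : Fin D, I μ ρ * I ν σ * C ρ σ lam


lemma Hten_eq {D : ℕ} (C : Fin D → Fin D → Fin D → ℝ) (I : Matrix (Fin D) (Fin D) ℝ)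
    (μ ν lam : Fin D) :
    Hten C I μ ν lam
      = (1/4) * (C μ ν lam - Fop C I μ ν lam - Fop C I lam μ ν - Fop C I ν lam μ) := rfl

section main
variable {C : Fin D → Fin D → Fin D → ℝ}
  (hC1 : ∀ μ ν lam, C μ ν lam = -C ν μ lam)
  (hC2 : ∀ μ ν lam, C μ ν lam = -C μ lam ν)
  (hI : I * I = -1)

include hC1 in
lemma Fop_swap (a b c : Fin D) : Fop C I a b c = -Fop C I b a c := by
  unfold Fop
  rw [Finset.sum_comm, ← Finset.sum_neg_distrib]
  refine Finset.sum_congr rfl fun σ _ => ?_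
  rw [← Finset.sum_neg_distrib]
  refine Finset.sum_congr rfl fun ρ _ => ?_
  rw [hC1 ρ σ c]; ring

include hC1 hC2 hI in
lemma Fop_Hten (a b c : Fin D) :
    Fop (fun x y z => Hten C I x y z) I a b c
      = (1/4) * (Fop C I a b c - C a b c + Fop C I b c a + Fop C I c a b) := by
  have expand : Fop (fun x y z => Hten C I x y z) I a b c
      = (1/4) * ((∑ ρ, ∑ σ, I a ρ * I b σ * C ρ σ c)
        - (∑ ρ, ∑ σ, I a ρ * I b σ * (∑ α, ∑ β, I ρ α * I σ β * C α β c))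
        - (∑ ρ, ∑ σ, I a ρ * I b σ * (∑ α, ∑ β, I c α * I ρ β * C α β σ))
        - (∑ ρ, ∑ σ, I a ρ * I b σ * (∑ α, ∑ β, I σ α * I c β * C α β ρ))) := by
    unfold Fop
    rw [show ∑ ρ, ∑ σ, I a ρ * I b σ * Hten C I ρ σ c
        = ∑ ρ, ∑ σ, ((1/4) * (I a ρ * I b σ * C ρ σ c)
          - (1/4) * (I a ρ * I b σ * (∑ α, ∑ β, I ρ α * I σ β * C α β c))
          - (1/4) * (I a ρ * I b σ * (∑ α, ∑ β, I c α * I ρ β * C α β σ))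
          - (1/4) * (I a ρ * I b σ * (∑ α, ∑ β, I σ α * I c β * C α β ρ))) from
      Finset.sum_congr rfl fun ρ _ => Finset.sum_congr rfl fun σ _ => by
        simp only [Hten]; ring]
    simp only [Finset.sum_sub_distrib, ← Finset.mul_sum]
    ring
  rw [expand, lemA I hI (fun α β => C α β c) a b,
    lemB I hI C a b c, lemC I hI C a b c]
  have e1 : ∑ α, ∑ σ, I c α * I b σ * C α a σ = -Fop C I c b a := by
    unfold Fop
    rw [← Finset.sum_neg_distrib]
    refine Finset.sum_congr rfl fun α _ => ?_
    rw [← Finset.sum_neg_distrib]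
    refine Finset.sum_congr rfl fun σ _ => ?_
    rw [hC2 α a σ]; ring
  have e2 : ∑ ρ, ∑ β, I a ρ * I c β * C b β ρ = -Fop C I a c b := by
    unfold Fop
    rw [← Finset.sum_neg_distrib]
    refine Finset.sum_congr rfl fun ρ _ => ?_
    rw [← Finset.sum_neg_distrib]
    refine Finset.sum_congr rfl fun β _ => ?_
    rw [show C b β ρ = -C ρ β b from by rw [hC1 b β ρ, hC2 β b ρ, hC1 β ρ b]; ring]
    ring
  rw [e1, e2, Fop_swap I hC1 c b a, Fop_swap I hC1 a c b]
  simp only [Fop]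
  ring

include hC1 hC2 hI in
lemma main' (μ ν lam : Fin D) :
    Hten (fun x y z => Hten C I x y z) I μ ν lam = Hten C I μ ν lam := by
  have hcyc : ∀ a b c : Fin D, C a b c = C b c a := by
    intro a b c; rw [hC1 a b c, hC2 b a c]; ring
  rw [Hten_eq, Hten_eq, Fop_Hten I hC1 hC2 hI, Fop_Hten I hC1 hC2 hI,
    Fop_Hten I hC1 hC2 hI, hcyc ν lam μ, hcyc lam μ ν]
  ring

end main

end Aux

theorem Hten_projector {D : ℕ} (C : Fin D → Fin D → Fin D → ℝ)
    (hC1 : ∀ μ ν lam, C μ ν lam = -C ν μ lam)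
    (hC2 : ∀ μ ν lam, C μ ν lam = -C μ lam ν)
    (I : Matrix (Fin D) (Fin D) ℝ) (hI : I * I = -1) :
    ∀ μ ν lam : Fin D,
      Hten (fun x y z => Hten C I x y z) I μ ν lam = Hten C I μ ν lam := by
  exact fun μ ν lam => main' I hC1 hC2 hI μ ν lam
end
end

section
/- Let C be a totally antisymmetric 3-tensor on a D-dimensional real vector space and I an endomorphism with I² = -id such that I_{μν} (with index lowered by the standard metric) is antisymmetric. Then H(C,I)_{μνλ} defined as (1/4)(C_{μνλ} - I_μ^ρ I_ν^σ C_{ρσλ} - I_λ^ρ I_μ^σ C_{ρσν} - I_ν^ρ I_λ^σ C_{ρσμ}) is totally antisymmetric in μ, ν, λ. -/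
open Finset Matrix

noncomputable section

lemma swap_sum {D : ℕ} (C : Fin D → Fin D → Fin D → ℝ)
    (hC1 : ∀ μ ν lam, C μ ν lam = -C ν μ lam)
    (I : Matrix (Fin D) (Fin D) ℝ) (a b x : Fin D) :
    ∑ ρ : Fin D, ∑ σ : Fin D, I a ρ * I b σ * C ρ σ x
      = -∑ ρ : Fin D, ∑ σ : Fin D, I b ρ * I a σ * C ρ σ x := by
  rw [Finset.sum_comm, ← Finset.sum_neg_distrib]
  refine Finset.sum_congr rfl fun σ _ => ?_
  rw [← Finset.sum_neg_distrib]
  refine Finset.sum_congr rfl fun ρ _ => ?_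
  rw [hC1 σ ρ x]; ring

theorem Hten_totally_antisymmetric {D : ℕ} (C : Fin D → Fin D → Fin D → ℝ)
    (hC1 : ∀ μ ν lam, C μ ν lam = -C ν μ lam)
    (hC2 : ∀ μ ν lam, C μ ν lam = -C μ lam ν)
    (I : Matrix (Fin D) (Fin D) ℝ) (hI : I * I = -1) (hIa : Iᵀ = -I) :
    ∀ μ ν lam : Fin D,
      Hten C I μ ν lam = -Hten C I ν μ lam ∧ Hten C I μ ν lam = -Hten C I μ lam ν := by
  intro μ ν lam
  unfold Hten
  rw [swap_sum C hC1 I ν μ lam, swap_sum C hC1 I lam ν μ, swap_sum C hC1 I μ lam ν]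
  constructor
  · rw [hC1 μ ν lam]; ring
  · rw [hC2 μ ν lam]; ring
end
end
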